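/- Assume the system is q-eigenvalue observable with s ≤ q ≤ 2s, and the data Y_1,…,Y_p are generated under at most s attacks from x_true with attacked sensor set Λ_A, |Λ_A| ≤ s. Then for every subspace index j: P_j x_true ∈ X_j, every element of X_j other than P_j x_true agrees only with sensors in Λ_A ∩ Obs_j, and the number of elements of X_j different from P_j x_true is at most ⌊s/(q+1−s)⌋. (Bound on the number of fake substates an attacker can inject into a subspace.) -/

import Mathlib

open Matrix

noncomputable section

/-- Generalized eigenspace of `A` for the eigenvalue `μ`: `ker((A - μ I)^n)`. -/
def genEig {n : ℕ} (A : Matrix (Fin n) (Fin n) ℝ) (μ : ℝ) : Set (Fin n → ℝ) :=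
  {x | ((A - μ • 1) ^ n).mulVec x = 0}

/-- Observability map of sensor `i` over horizon `t`: `(𝒪_i x)_τ = C_i A^τ x`. -/
def obsMap {n p : ℕ} (t : ℕ) (A : Matrix (Fin n) (Fin n) ℝ)
    (C : Matrix (Fin p) (Fin n) ℝ) (i : Fin p) (x : Fin n → ℝ) : Fin (t + 1) → ℝ :=
  fun τ => ((C * A ^ (τ : ℕ)).mulVec x) i

/-- `x` is a plausible state for the data `Y`: some set `Γ` of `p - s` sensors is
exactly explained by `x`. -/
def plausible {n p : ℕ} (t : ℕ) (A : Matrix (Fin n) (Fin n) ℝ)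
    (C : Matrix (Fin p) (Fin n) ℝ) (s : ℕ) (Y : Fin p → Fin (t + 1) → ℝ)
    (x : Fin n → ℝ) : Prop :=
  ∃ Γ : Finset (Fin p), Γ.card = p - s ∧ ∀ i ∈ Γ, obsMap t A C i x = Y i

/-- The eigenvalue `μ` of `A` is observable with respect to sensor `i` (over `ℂ`). -/
def eigObs {n p : ℕ} (A : Matrix (Fin n) (Fin n) ℝ)
    (C : Matrix (Fin p) (Fin n) ℝ) (μ : ℝ) (i : Fin p) : Prop :=
  ∀ v : Fin n → ℂ, (A.map Complex.ofReal).mulVec v = (μ : ℂ) • v →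
    ((C.map Complex.ofReal).mulVec v) i = 0 → v = 0

/-- The substate `xj ∈ V^j` agrees with sensor `i`: some choice of substates in the
other generalized eigenspaces makes the total response match the data `Y i`. -/
def agrees {n p r : ℕ} (t : ℕ) (A : Matrix (Fin n) (Fin n) ℝ)
    (C : Matrix (Fin p) (Fin n) ℝ) (lam : Fin r → ℝ)
    (Y : Fin p → Fin (t + 1) → ℝ) (j : Fin r) (xj : Fin n → ℝ) (i : Fin p) : Prop :=
  ∃ z : Fin r → Fin n → ℝ, (∀ k, k ≠ j → z k ∈ genEig A (lam k)) ∧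
    obsMap t A C i (xj + ∑ k ∈ Finset.univ.erase j, z k) = Y i

/-- `X_j`: the substates in `V^j` that agree with at least `q + 1 - s` sensors for
which `λ_j` is observable. -/
def Xset {n p r : ℕ} (t : ℕ) (A : Matrix (Fin n) (Fin n) ℝ)
    (C : Matrix (Fin p) (Fin n) ℝ) (lam : Fin r → ℝ)
    (Y : Fin p → Fin (t + 1) → ℝ) (s q : ℕ) (j : Fin r) : Set (Fin n → ℝ) :=
  {xj | xj ∈ genEig A (lam j) ∧
    q + 1 - s ≤ {i : Fin p | eigObs A C (lam j) i ∧ agrees t A C lam Y j xj i}.ncard}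

/-- `I_j(xj)`: the sensors that do not agree with the substate `xj`. -/
def Iset {n p r : ℕ} (t : ℕ) (A : Matrix (Fin n) (Fin n) ℝ)
    (C : Matrix (Fin p) (Fin n) ℝ) (lam : Fin r → ℝ)
    (Y : Fin p → Fin (t + 1) → ℝ) (j : Fin r) (xj : Fin n → ℝ) : Set (Fin p) :=
  {i | ¬ agrees t A C lam Y j xj i}

section FSCBHelpers

open Polynomial

variable {n p : ℕ}

/-- sensor `i` reads zero on `x` at all times -/
def uoAll (A : Matrix (Fin n) (Fin n) ℝ) (C : Matrix (Fin p) (Fin n) ℝ) (i : Fin p)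
    (x : Fin n → ℝ) : Prop :=
  ∀ m : ℕ, (C.mulVec ((A ^ m).mulVec x)) i = 0

lemma obsMap_sub' (t : ℕ) (A : Matrix (Fin n) (Fin n) ℝ) (C : Matrix (Fin p) (Fin n) ℝ)
    (i : Fin p) (x y : Fin n → ℝ) :
    obsMap t A C i (x - y) = obsMap t A C i x - obsMap t A C i y := by
  funext τ
  simp [obsMap, Matrix.mulVec_sub]

lemma sum_mulVec' {m' : ℕ} {ι : Type*} (s : Finset ι) (M : ι → Matrix (Fin m') (Fin n) ℝ)
    (v : Fin n → ℝ) : (∑ k ∈ s, M k).mulVec v = ∑ k ∈ s, (M k).mulVec v := by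
  classical
  induction s using Finset.induction_on with
  | empty => simp
  | insert _ _ h ih => simp [Finset.sum_insert h, Matrix.add_mulVec, ih]

lemma mulVec_sum' {m' : ℕ} {ι : Type*} (s : Finset ι) (M : Matrix (Fin m') (Fin n) ℝ)
    (v : ι → Fin n → ℝ) : M.mulVec (∑ k ∈ s, v k) = ∑ k ∈ s, M.mulVec (v k) := by
  classical
  induction s using Finset.induction_on with
  | empty => simp
  | insert _ _ h ih => simp [Finset.sum_insert h, Matrix.mulVec_add, ih]

lemma uoAll_of_fin {A : Matrix (Fin n) (Fin n) ℝ} {C : Matrix (Fin p) (Fin n) ℝ} {i : Fin p}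
    {x : Fin n → ℝ} (hn : 0 < n)
    (h : ∀ m, m < n → (C.mulVec ((A ^ m).mulVec x)) i = 0) : uoAll A C i x := by
  intro m
  induction m using Nat.strong_induction_on with
  | _ m ih =>
    rcases lt_or_ge m n with hm | hm
    · exact h m hm
    · -- Cayley-Hamilton step
      set e : ℝ[X] := X ^ n - A.charpoly with he
      have hmon : (A.charpoly).Monic := A.charpoly_monic
      have hdeg : A.charpoly.natDegree = n := by
        simpa using A.charpoly_natDegree_eq_dim
      have hdlt : e.natDegree < n := by
        by_cases h0 : A.charpoly - X ^ n = 0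
        · have : e = 0 := by rw [he]; rw [sub_eq_zero] at h0 ⊢; exact h0.symm
          rw [this]; simpa using hn  
        · have hdl : (A.charpoly - X ^ n).degree < (n : WithBot ℕ) := by
            have := Polynomial.degree_sub_lt
              (by rw [Polynomial.degree_X_pow, Polynomial.degree_eq_natDegree hmon.ne_zero, hdeg])
              hmon.ne_zero
              (by rw [Polynomial.Monic.leadingCoeff hmon, Polynomial.leadingCoeff_X_pow])
            rwa [Polynomial.degree_eq_natDegree hmon.ne_zero, hdeg] at this
          have : e = -(A.charpoly - X ^ n) := by ring
          rw [this, Polynomial.natDegree_neg]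
          exact Polynomial.natDegree_lt_iff_degree_lt h0 |>.2 hdl
      have hAe : A ^ n = Polynomial.aeval A e := by
        rw [he, _root_.map_sub, Matrix.aeval_self_charpoly, sub_zero, _root_.map_pow, Polynomial.aeval_X]
      have hAn : (A ^ n).mulVec x = ∑ k ∈ Finset.range n, e.coeff k • (A ^ k).mulVec x := by
        rw [hAe, Polynomial.aeval_eq_sum_range' hdlt, sum_mulVec']
        exact Finset.sum_congr rfl fun k _ => Matrix.smul_mulVec _ _ _
      have hstep : (A ^ m).mulVec x
          = ∑ k ∈ Finset.range n, e.coeff k • (A ^ (m - n + k)).mulVec x := by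
        have hmm : A ^ m = A ^ (m - n) * A ^ n := by rw [← pow_add]; congr 1; omega
        rw [hmm, ← Matrix.mulVec_mulVec, hAn, mulVec_sum']
        refine Finset.sum_congr rfl fun k _ => ?_
        rw [Matrix.mulVec_smul, Matrix.mulVec_mulVec, ← pow_add]
      rw [hstep, mulVec_sum']
      rw [Finset.sum_apply]
      refine Finset.sum_eq_zero fun k hk => ?_
      rw [Matrix.mulVec_smul, Pi.smul_apply, smul_eq_mul,
        ih (m - n + k) (by simp at hk; omega), mul_zero]

lemma uoAll_poly {A : Matrix (Fin n) (Fin n) ℝ} {C : Matrix (Fin p) (Fin n) ℝ} {i : Fin p}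
    {x : Fin n → ℝ} (h : uoAll A C i x) (f : ℝ[X]) :
    uoAll A C i ((Polynomial.aeval A f).mulVec x) := by
  induction f using Polynomial.induction_on' with
  | add f g hf hg =>
    intro m
    rw [_root_.map_add, Matrix.add_mulVec, Matrix.mulVec_add, Matrix.mulVec_add, Pi.add_apply,
      hf m, hg m, add_zero]
  | monomial k a =>
    intro m
    have h1 : (Polynomial.aeval A (Polynomial.monomial k a)).mulVec x
        = a • (A ^ k).mulVec x := by
      rw [Polynomial.aeval_monomial, Algebra.algebraMap_eq_smul_one, smul_mul_assoc, one_mul,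
        Matrix.smul_mulVec]
    rw [h1, Matrix.mulVec_smul, Matrix.mulVec_smul, Pi.smul_apply, smul_eq_mul,
      Matrix.mulVec_mulVec, Matrix.mulVec_mulVec, Matrix.mul_assoc, ← pow_add,
      ← Matrix.mulVec_mulVec, h (m + k), mul_zero]

lemma genEig_sub' {A : Matrix (Fin n) (Fin n) ℝ} {μ : ℝ} {x y : Fin n → ℝ}
    (hx : x ∈ genEig A μ) (hy : y ∈ genEig A μ) : x - y ∈ genEig A μ := by
  simp only [genEig, Set.mem_setOf_eq] at *
  rw [Matrix.mulVec_sub, hx, hy, sub_zero]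

lemma aeval_X_sub_C_pow (A : Matrix (Fin n) (Fin n) ℝ) (μ : ℝ) (k : ℕ) :
    Polynomial.aeval A ((X - Polynomial.C μ) ^ k) = (A - μ • 1) ^ k := by
  rw [_root_.map_pow, _root_.map_sub, Polynomial.aeval_X, Polynomial.aeval_C,
    Algebra.algebraMap_eq_smul_one]

/-- KEY: a sum of generalized-eigenspace components that sensor `i` cannot see over a
horizon of length `≥ n` must have zero component in any eigenspace observable by `i`. -/
lemma key_component_zero {r : ℕ} {t : ℕ} (ht : n - 1 ≤ t)
    {A : Matrix (Fin n) (Fin n) ℝ} {C : Matrix (Fin p) (Fin n) ℝ}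
    {lam : Fin r → ℝ} (hlam : Function.Injective lam)
    {i : Fin p} {j : Fin r} (hobs : eigObs A C (lam j) i)
    (c : Fin r → Fin n → ℝ) (hc : ∀ k, c k ∈ genEig A (lam k))
    (h0 : obsMap t A C i (∑ k, c k) = 0) : c j = 0 := by
  rcases Nat.eq_zero_or_pos n with hn | hn
  · subst hn; funext idx; exact idx.elim0
  by_contra hne
  -- the sum is unobservable at all times
  have huod : uoAll A C i (∑ k, c k) := by
    refine uoAll_of_fin hn fun m hm => ?_
    have hmt : m < t + 1 := by omega
    have := congrFun h0 ⟨m, hmt⟩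
    simpa [obsMap, Matrix.mulVec_mulVec] using this
  -- extract the j-component by a polynomial in A
  set g : ℝ[X] := ∏ k ∈ Finset.univ.erase j, (X - Polynomial.C (lam k)) ^ n with hg
  have hcop : IsCoprime ((X - Polynomial.C (lam j)) ^ n) g := by
    refine IsCoprime.prod_right fun k hk => ?_
    exact (Polynomial.pairwise_coprime_X_sub_C hlam
      (Finset.ne_of_mem_erase hk).symm).pow
  obtain ⟨u, v, huv⟩ := hcop
  have hkill : ∀ k, k ≠ j → (Polynomial.aeval A (v * g)).mulVec (c k) = 0 := by
    intro k hk
    have hkmem : k ∈ Finset.univ.erase j := Finset.mem_erase.2 ⟨hk, Finset.mem_univ k⟩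
    have hgsplit : v * g
        = (v * ∏ k' ∈ (Finset.univ.erase j).erase k, (X - Polynomial.C (lam k')) ^ n)
          * ((X - Polynomial.C (lam k)) ^ n) := by
      rw [hg, ← Finset.mul_prod_erase _ _ hkmem]; ring
    rw [hgsplit, _root_.map_mul, ← Matrix.mulVec_mulVec, aeval_X_sub_C_pow, hc k, Matrix.mulVec_zero]
  have hjfix : (Polynomial.aeval A (v * g)).mulVec (c j) = c j := by
    have hvg : v * g = 1 - u * (X - Polynomial.C (lam j)) ^ n := by
      rw [← huv]; ring
    rw [hvg, _root_.map_sub, _root_.map_one, _root_.map_mul, Matrix.sub_mulVec, Matrix.one_mulVec,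
      ← Matrix.mulVec_mulVec, aeval_X_sub_C_pow, hc j, Matrix.mulVec_zero, sub_zero]
  have hcj : (Polynomial.aeval A (v * g)).mulVec (∑ k, c k) = c j := by
    rw [mulVec_sum']
    rw [Finset.sum_eq_single_of_mem j (Finset.mem_univ j)
      (fun k _ hk => hkill k hk)]
    exact hjfix
  have huoc : uoAll A C i (c j) := hcj ▸ uoAll_poly huod (v * g)
  -- extract an honest eigenvector
  have hex : ∃ m, ((A - lam j • 1) ^ m).mulVec (c j) = 0 := ⟨n, hc j⟩
  classical
  set m₀ := Nat.find hex with hm₀def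
  have hm₀ : ((A - lam j • 1) ^ m₀).mulVec (c j) = 0 := Nat.find_spec hex
  have hm₀pos : 0 < m₀ := by
    rcases Nat.eq_zero_or_pos m₀ with h0' | h0'
    · exfalso; apply hne
      have := hm₀; rw [h0', pow_zero, Matrix.one_mulVec] at this; exact this
    · exact h0'
  set v₀ : Fin n → ℝ := ((A - lam j • 1) ^ (m₀ - 1)).mulVec (c j) with hv₀
  have hv₀ne : v₀ ≠ 0 := Nat.find_min hex (by omega)
  have hAv₀ : (A - lam j • 1).mulVec v₀ = 0 := by
    rw [hv₀, Matrix.mulVec_mulVec, ← pow_succ']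
    have : m₀ - 1 + 1 = m₀ := by omega
    rw [this]; exact hm₀
  have hAv : A.mulVec v₀ = lam j • v₀ := by
    have := hAv₀
    rw [Matrix.sub_mulVec, Matrix.smul_mulVec, Matrix.one_mulVec, sub_eq_zero] at this
    exact this
  have huov : uoAll A C i v₀ := by
    have : v₀ = (Polynomial.aeval A ((X - Polynomial.C (lam j)) ^ (m₀ - 1))).mulVec (c j) := by
      rw [aeval_X_sub_C_pow]
    exact this ▸ uoAll_poly huoc _
  have hCv : (C.mulVec v₀) i = 0 := by
    have := huov 0
    rwa [pow_zero, Matrix.one_mulVec] at this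
  -- complexify
  set w : Fin n → ℂ := fun k => (v₀ k : ℂ) with hw
  have h1 : (A.map Complex.ofReal).mulVec w = ((lam j : ℝ) : ℂ) • w := by
    funext k
    have hmap := (RingHom.map_mulVec Complex.ofRealHom A v₀ k).symm
    have hA : A.map Complex.ofReal = A.map Complex.ofRealHom := rfl
    calc ((A.map Complex.ofReal).mulVec w) k
        = ((A.map Complex.ofRealHom).mulVec (Complex.ofRealHom ∘ v₀)) k := rfl
      _ = Complex.ofRealHom ((A.mulVec v₀) k) := hmap
      _ = ((lam j : ℝ) : ℂ) * (v₀ k : ℂ) := by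
          rw [hAv]; simp
      _ = (((lam j : ℝ) : ℂ) • w) k := rfl
  have h2 : ((C.map Complex.ofReal).mulVec w) i = 0 := by
    have hmap := (RingHom.map_mulVec Complex.ofRealHom C v₀ i).symm
    calc ((C.map Complex.ofReal).mulVec w) i
        = Complex.ofRealHom ((C.mulVec v₀) i) := hmap
      _ = 0 := by rw [hCv]; simp
  have := hobs w h1 h2
  apply hv₀ne
  funext k
  have hk := congrFun this k
  simpa [hw, Complex.ofReal_eq_zero] using hk

/-- Two substates in the same generalized eigenspace agreeing with a common sensor that
observes the eigenvalue must be equal. -/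
lemma agree_unique {r : ℕ} {t : ℕ} (ht : n - 1 ≤ t)
    {A : Matrix (Fin n) (Fin n) ℝ} {C : Matrix (Fin p) (Fin n) ℝ}
    {lam : Fin r → ℝ} (hlam : Function.Injective lam)
    {Y : Fin p → Fin (t + 1) → ℝ} {i : Fin p} {j : Fin r}
    (hobs : eigObs A C (lam j) i)
    {x1 x2 : Fin n → ℝ} (h1 : x1 ∈ genEig A (lam j)) (h2 : x2 ∈ genEig A (lam j))
    (ha1 : agrees t A C lam Y j x1 i) (ha2 : agrees t A C lam Y j x2 i) : x1 = x2 := by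
  classical
  obtain ⟨z1, hz1, e1⟩ := ha1
  obtain ⟨z2, hz2, e2⟩ := ha2
  set c : Fin r → Fin n → ℝ := fun k => if k = j then x1 - x2 else z1 k - z2 k with hcdef
  have hc : ∀ k, c k ∈ genEig A (lam k) := by
    intro k
    by_cases hk : k = j
    · subst hk; simpa [hcdef] using genEig_sub' h1 h2
    · simpa [hcdef, hk] using genEig_sub' (hz1 k hk) (hz2 k hk)
  have hsum : ∑ k, c k
      = (x1 + ∑ k ∈ Finset.univ.erase j, z1 k) - (x2 + ∑ k ∈ Finset.univ.erase j, z2 k) := by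
    rw [← Finset.add_sum_erase _ c (Finset.mem_univ j)]
    have hcj : c j = x1 - x2 := by simp [hcdef]
    have herase : ∑ k ∈ Finset.univ.erase j, c k
        = ∑ k ∈ Finset.univ.erase j, (z1 k - z2 k) := by
      refine Finset.sum_congr rfl fun k hk => ?_
      simp [hcdef, (Finset.mem_erase.1 hk).1]
    rw [hcj, herase, Finset.sum_sub_distrib]
    abel
  have h0 : obsMap t A C i (∑ k, c k) = 0 := by
    rw [hsum, obsMap_sub', e1, e2, sub_self]
  have := key_component_zero ht hlam hobs c hc h0
  have hcj : c j = x1 - x2 := by simp [hcdef]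
  rw [hcj] at this
  exact sub_eq_zero.1 this

end FSCBHelpers

/-- the true substate belongs to `X_j`; any other element of `X_j`
agrees, among the sensors observing `λ_j`, only with attacked sensors; and the number
of fake substates in `X_j` is at most `⌊s / (q + 1 - s)⌋`. -/
theorem fake_substate_count_bound
    {n p r s q t : ℕ} (hsp : s ≤ p) (hsq : s ≤ q) (hq2s : q ≤ 2 * s) (ht : n - 1 ≤ t)
    (A : Matrix (Fin n) (Fin n) ℝ) (C : Matrix (Fin p) (Fin n) ℝ)
    (lam : Fin r → ℝ) (hlam : Function.Injective lam)
    (heig : ∀ j, ∃ w : Fin n → ℝ, w ≠ 0 ∧ A.mulVec w = lam j • w)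
    (P : Fin r → Matrix (Fin n) (Fin n) ℝ)
    (hPmem : ∀ j, ∀ x : Fin n → ℝ, (P j).mulVec x ∈ genEig A (lam j))
    (hPsum : ∀ x : Fin n → ℝ, ∑ j, (P j).mulVec x = x)
    (Y : Fin p → Fin (t + 1) → ℝ) (xtrue : Fin n → ℝ)
    (ΛA : Finset (Fin p)) (hΛA : ΛA.card ≤ s)
    (hdata : ∀ i ∉ ΛA, Y i = obsMap t A C i xtrue)
    (hqobs : ∀ j, q + 1 ≤ {i : Fin p | eigObs A C (lam j) i}.ncard) :
    ∀ j : Fin r,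
      ((P j).mulVec xtrue ∈ Xset t A C lam Y s q j) ∧
      (∀ xj ∈ Xset t A C lam Y s q j, xj ≠ (P j).mulVec xtrue →
        ∀ i : Fin p, eigObs A C (lam j) i → agrees t A C lam Y j xj i → i ∈ ΛA) ∧
      {xj : Fin n → ℝ | xj ∈ Xset t A C lam Y s q j ∧
          xj ≠ (P j).mulVec xtrue}.ncard ≤ s / (q + 1 - s) := by
  classical
  intro j
  -- the true substate agrees with every unattacked sensor
  have htrueag : ∀ i ∉ ΛA, agrees t A C lam Y j ((P j).mulVec xtrue) i := by
    intro i hi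
    refine ⟨fun k => (P k).mulVec xtrue, fun k _ => hPmem k xtrue, ?_⟩
    have hx : (P j).mulVec xtrue + ∑ k ∈ Finset.univ.erase j, (P k).mulVec xtrue = xtrue := by
      rw [Finset.add_sum_erase _ (fun k => (P k).mulVec xtrue) (Finset.mem_univ j)]
      exact hPsum xtrue
    rw [hx]
    exact (hdata i hi).symm
  -- Part 1
  have part1 : (P j).mulVec xtrue ∈ Xset t A C lam Y s q j := by
    refine ⟨hPmem j xtrue, ?_⟩
    have hsub : {i : Fin p | eigObs A C (lam j) i} \ ↑ΛA
        ⊆ {i : Fin p | eigObs A C (lam j) i ∧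
            agrees t A C lam Y j ((P j).mulVec xtrue) i} := by
      intro i hi
      exact ⟨hi.1, htrueag i (by simpa using hi.2)⟩
    have h1 : {i : Fin p | eigObs A C (lam j) i}.ncard
        ≤ ({i : Fin p | eigObs A C (lam j) i} \ ↑ΛA).ncard + (↑ΛA : Set (Fin p)).ncard :=
      Set.ncard_le_ncard_diff_add_ncard _ _ (Set.toFinite _)
    have h2 := hqobs j
    rw [Set.ncard_coe_finset] at h1
    have h3 := Set.ncard_le_ncard hsub (Set.toFinite _)
    omega
  -- Part 2
  have part2 : ∀ xj ∈ Xset t A C lam Y s q j, xj ≠ (P j).mulVec xtrue →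
      ∀ i : Fin p, eigObs A C (lam j) i → agrees t A C lam Y j xj i → i ∈ ΛA := by
    intro xj hxj hne i hoi hai
    by_contra hiA
    exact hne (agree_unique ht hlam hoi hxj.1 (hPmem j xtrue) hai (htrueag i hiA))
  refine ⟨part1, part2, ?_⟩
  -- Part 3: counting fake substates
  set T : (Fin n → ℝ) → Set (Fin p) :=
    fun x => {i : Fin p | eigObs A C (lam j) i ∧ agrees t A C lam Y j x i} with hT
  set Fk : Set (Fin n → ℝ) :=
    {xj : Fin n → ℝ | xj ∈ Xset t A C lam Y s q j ∧ xj ≠ (P j).mulVec xtrue} with hFk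
  have hq1s : 0 < q + 1 - s := by omega
  have hTcard : ∀ x ∈ Fk, q + 1 - s ≤ (T x).ncard := fun x hx => hx.1.2
  have hTsub : ∀ x ∈ Fk, T x ⊆ ↑ΛA := by
    intro x hx i hi
    exact part2 x hx.1 hx.2 i hi.1 hi.2
  have hTne : ∀ x ∈ Fk, (T x).Nonempty := by
    intro x hx
    have := hTcard x hx
    exact (Set.ncard_pos (Set.toFinite _)).1 (by omega)
  have hdisj : ∀ x ∈ Fk, ∀ x' ∈ Fk, x ≠ x' → Disjoint (T x) (T x') := by
    intro x hx x' hx' hne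
    rw [Set.disjoint_left]
    intro i hi hi'
    exact hne (agree_unique ht hlam hi.1 hx.1.1 hx'.1.1 hi.2 hi'.2)
  rcases Set.eq_empty_or_nonempty Fk with hFke | hFkne
  · rw [hFke]; simp
  obtain ⟨x₀, hx₀⟩ := hFkne
  obtain ⟨i₀, _⟩ := hTne x₀ hx₀
  have hFkfin : Fk.Finite := by
    set f : (Fin n → ℝ) → Fin p :=
      fun x => if h : (T x).Nonempty then h.some else i₀ with hf
    have hinj : Set.InjOn f Fk := by
      intro x hx x' hx' hfe
      by_contra hne
      have h1 : f x ∈ T x := by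
        rw [hf]; dsimp only; rw [dif_pos (hTne x hx)]; exact (hTne x hx).some_mem
      have h2 : f x' ∈ T x' := by
        rw [hf]; dsimp only; rw [dif_pos (hTne x' hx')]; exact (hTne x' hx').some_mem
      rw [hfe] at h1
      exact (Set.disjoint_left.1 (hdisj x hx x' hx' hne)) (hfe ▸ h1) h2
    exact Set.Finite.of_finite_image (Set.toFinite _) hinj
  set F : Finset (Fin n → ℝ) := hFkfin.toFinset with hFdef
  have hFcard : Fk.ncard = F.card := Set.ncard_eq_toFinset_card Fk hFkfin
  set Tf : (Fin n → ℝ) → Finset (Fin p) :=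
    fun x => ΛA.filter (fun i => i ∈ T x) with hTf
  have hTfcoe : ∀ x ∈ F, (↑(Tf x) : Set (Fin p)) = T x := by
    intro x hx
    have hxF : x ∈ Fk := hFkfin.mem_toFinset.1 hx
    ext i
    simp only [hTf, Finset.coe_filter, Set.mem_setOf_eq]
    exact ⟨fun h => h.2, fun h => ⟨hTsub x hxF h, h⟩⟩
  have hTfcard : ∀ x ∈ F, q + 1 - s ≤ (Tf x).card := by
    intro x hx
    have := hTcard x (hFkfin.mem_toFinset.1 hx)
    rwa [← hTfcoe x hx, Set.ncard_coe_finset] at this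
  have hdisjF : ∀ x ∈ F, ∀ x' ∈ F, x ≠ x' → Disjoint (Tf x) (Tf x') := by
    intro x hx x' hx' hne
    have := hdisj x (hFkfin.mem_toFinset.1 hx) x' (hFkfin.mem_toFinset.1 hx') hne
    rw [Finset.disjoint_left]
    intro i hi hi'
    have hi2 : i ∈ T x := by rw [← hTfcoe x hx]; exact_mod_cast hi
    have hi2' : i ∈ T x' := by rw [← hTfcoe x' hx']; exact_mod_cast hi'
    exact (Set.disjoint_left.1 this) hi2 hi2'
  have hbiU : (F.biUnion Tf).card = ∑ x ∈ F, (Tf x).card := Finset.card_biUnion hdisjF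
  have hsubU : F.biUnion Tf ⊆ ΛA := by
    refine Finset.biUnion_subset.2 fun x _ => ?_
    exact Finset.filter_subset _ _
  have hmul : F.card * (q + 1 - s) ≤ s := by
    have h1 : F.card • (q + 1 - s) ≤ ∑ x ∈ F, (Tf x).card :=
      Finset.card_nsmul_le_sum F _ _ hTfcard
    have h2 : (F.biUnion Tf).card ≤ ΛA.card := Finset.card_le_card hsubU
    rw [smul_eq_mul] at h1
    omega
  rw [hFcard]
  exact (Nat.le_div_iff_mul_le hq1s).2 hmul
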